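/- Let B be a bipartite graph with parts {v_1,…,v_n} and {w_1,…,w_d}, let r be the number of degree-1 vertices among the v_i and s the number of degree-1 vertices among the w_j. Then λ(B) ≤ min{n − r, d − s} whenever n − r ≥ 1 and d − s ≥ 1, where λ is the recession connectivity. -/

import Mathlib

/-! Scaffolding for bipartite graphs given by edge sets `B : Finset (L × R)`,
their recession graphs, and the recession connectivity `λ`. -/

variable {L R : Type*}

/-- The undirected simple graph on `L ⊕ R` determined by an edge set `S ⊆ L × R`. -/
def sgraph (S : Finset (L × R)) : SimpleGraph (L ⊕ R) where
  Adj v w := (∃ e ∈ S, v = Sum.inl e.1 ∧ w = Sum.inr e.2) ∨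
             (∃ e ∈ S, w = Sum.inl e.1 ∧ v = Sum.inr e.2)
  symm := by
    constructor
    rintro v w (⟨e, he, h1, h2⟩ | ⟨e, he, h1, h2⟩)
    · exact Or.inr ⟨e, he, h1, h2⟩
    · exact Or.inl ⟨e, he, h1, h2⟩
  loopless := by
    constructor
    rintro v (⟨e, _, h1, h2⟩ | ⟨e, _, h1, h2⟩) <;> subst h1 <;> simp_all

/-- A vertex is incident to the edge set `B` if it is an endpoint of one of its edges. -/
def incid (B : Finset (L × R)) (v : L ⊕ R) : Prop :=
  ∃ e ∈ B, v = Sum.inl e.1 ∨ v = Sum.inr e.2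

/-- The arcs of the recession graph `R(S; B)`: every edge of `B` gives an arc from its
`L`-endpoint to its `R`-endpoint, and every edge of `S` additionally gives the reverse arc. -/
def recArc (S B : Finset (L × R)) (v w : L ⊕ R) : Prop :=
  (∃ e ∈ B, v = Sum.inl e.1 ∧ w = Sum.inr e.2) ∨
  (∃ e ∈ S, w = Sum.inl e.1 ∧ v = Sum.inr e.2)

/-- The recession graph `R(S; B)` is strongly connected: every vertex of `B` reaches
every other vertex of `B` by a directed path. -/
def RecStrong (S B : Finset (L × R)) : Prop :=
  ∀ v w, incid B v → incid B w → Relation.ReflTransGen (recArc S B) v w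

/-- The number of connected components of (the graph of) `S` containing at least one edge. -/
noncomputable def numComp (S : Finset (L × R)) : ℕ :=
  Set.ncard {C : (sgraph S).ConnectedComponent |
    ∃ e ∈ S, C = (sgraph S).connectedComponentMk (Sum.inl e.1)}

/-- The recession connectivity `λ(B)`:  the maximum number of connected components of a
subgraph `S ⊆ B` for which the recession graph `R(S; B)` is strongly connected. -/
noncomputable def recConn (B : Finset (L × R)) : ℕ :=
  sSup {m | ∃ S ⊆ B, RecStrong S B ∧ numComp S = m}

/-- The graph of the edge set `B` is connected (on its own vertex set). -/
def ConnectedOn (B : Finset (L × R)) : Prop :=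
  B.Nonempty ∧ ∀ v w, incid B v → incid B w → (sgraph B).Reachable v w

section Aux

variable {L R : Type*}

lemma edge_at_of_reachable (S : Finset (L × R)) {x y : L ⊕ R}
    (h : (sgraph S).Reachable x y) (hne : x ≠ y) :
    (∃ e ∈ S, x = Sum.inl e.1) ∨ (∃ e ∈ S, x = Sum.inr e.2) := by
  obtain ⟨p⟩ := h
  cases p with
  | nil => exact absurd rfl hne
  | cons h' p' =>
    rcases h' with ⟨e, he, h1, h2⟩ | ⟨e, he, h1, h2⟩
    · exact Or.inl ⟨e, he, h1⟩
    · exact Or.inr ⟨e, he, h2⟩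

lemma numComp_le_L [Fintype L] [DecidableEq L] [DecidableEq R]
    (B S : Finset (L × R)) (hSB : S ⊆ B) (hst : RecStrong S B)
    (h1 : 1 ≤ Fintype.card L -
      (Finset.univ.filter fun v : L => (B.filter fun e => e.1 = v).card = 1).card) :
    numComp S ≤ Fintype.card L -
      (Finset.univ.filter fun v : L => (B.filter fun e => e.1 = v).card = 1).card := by
  classical
  have hNL : Nonempty L := Fintype.card_pos_iff.mp (le_trans h1 (Nat.sub_le _ _))
  set G := sgraph S with hG
  set CS : Set G.ConnectedComponent :=
    {C | ∃ e ∈ S, C = G.connectedComponentMk (Sum.inl e.1)} with hCS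
  by_cases hA : ∀ C ∈ CS, ∃ v : L,
      G.connectedComponentMk (Sum.inl v) = C ∧ (B.filter fun e => e.1 = v).card ≠ 1
  · set T : Finset L :=
      Finset.univ.filter (fun v : L => ¬ (B.filter fun e => e.1 = v).card = 1) with hT
    have hTcard : T.card = Fintype.card L -
        (Finset.univ.filter fun v : L => (B.filter fun e => e.1 = v).card = 1).card := by
      rw [hT, Finset.filter_not, Finset.card_sdiff_of_subset (Finset.filter_subset _ _),
        Finset.card_univ]
    have hle : CS.ncard ≤ (T : Set L).ncard := by
      refine Set.ncard_le_ncard_of_injOn (fun C =>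
        if h : ∃ v : L, G.connectedComponentMk (Sum.inl v) = C ∧
            (B.filter fun e => e.1 = v).card ≠ 1 then h.choose else Classical.arbitrary L)
        ?_ ?_ T.finite_toSet
      · intro C hC
        have hP := hA C hC
        simp only [dif_pos hP]
        obtain ⟨-, h2'⟩ := hP.choose_spec
        simp only [hT, Finset.coe_filter, Finset.mem_univ, true_and, Set.mem_setOf_eq]
        exact h2'
      · intro C hC C' hC' heq
        have hP := hA C hC; have hP' := hA C' hC'
        simp only [dif_pos hP, dif_pos hP'] at heq
        rw [← hP.choose_spec.1, ← hP'.choose_spec.1, heq]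
    calc numComp S = CS.ncard := rfl
      _ ≤ (T : Set L).ncard := hle
      _ = T.card := Set.ncard_coe_finset T
      _ = _ := hTcard
  · push_neg at hA
    obtain ⟨C0, hC0mem, hbad⟩ := hA
    obtain ⟨e0, he0, hC0⟩ := hC0mem
    have hclosed : ∀ x y, recArc S B x y →
        G.connectedComponentMk x = C0 → G.connectedComponentMk y = C0 := by
      rintro x y (⟨e', he'B, hx1, hy1⟩ | ⟨e', he'S, hy1, hx1⟩) hx
      · subst hx1; subst hy1
        have hdeg : (B.filter fun e => e.1 = e'.1).card = 1 := hbad _ hx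
        have he'S : e' ∈ S := by
          have hreach : G.Reachable (Sum.inl e'.1) (Sum.inl e0.1) := by
            rw [hC0] at hx
            exact SimpleGraph.ConnectedComponent.eq.mp hx
          obtain ⟨eS, heS, heS1⟩ : ∃ eS ∈ S, eS.1 = e'.1 := by
            by_cases hne : (Sum.inl e'.1 : L ⊕ R) = Sum.inl e0.1
            · exact ⟨e0, he0, (Sum.inl.inj hne).symm⟩
            · rcases edge_at_of_reachable S hreach hne with ⟨e1, he1, hh⟩ | ⟨e1, he1, hh⟩
              · exact ⟨e1, he1, (Sum.inl.inj hh).symm⟩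
              · simp at hh
          have huniq := Finset.card_le_one.mp (le_of_eq hdeg)
          have h1m : e' ∈ B.filter (fun e => e.1 = e'.1) := Finset.mem_filter.mpr ⟨he'B, rfl⟩
          have h2m : eS ∈ B.filter (fun e => e.1 = e'.1) := Finset.mem_filter.mpr ⟨hSB heS, heS1⟩
          rw [huniq _ h1m _ h2m]; exact heS
        have hadj : G.Adj (Sum.inl e'.1) (Sum.inr e'.2) := Or.inl ⟨e', he'S, rfl, rfl⟩
        rw [← hx]
        exact (SimpleGraph.ConnectedComponent.eq.mpr hadj.reachable).symm
      · subst hx1; subst hy1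
        have hadj : G.Adj (Sum.inl e'.1) (Sum.inr e'.2) := Or.inl ⟨e', he'S, rfl, rfl⟩
        rw [← hx]
        exact SimpleGraph.ConnectedComponent.eq.mpr hadj.reachable
    have hsub : CS ⊆ {C0} := by
      rintro C ⟨e, he, rfl⟩
      have hreach := hst (Sum.inl e0.1) (Sum.inl e.1)
        ⟨e0, hSB he0, Or.inl rfl⟩ ⟨e, hSB he, Or.inl rfl⟩
      have hgen : ∀ z, Relation.ReflTransGen (recArc S B) (Sum.inl e0.1) z →
          G.connectedComponentMk z = C0 := by
        intro z hz
        induction hz with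
        | refl => exact hC0.symm
        | tail _ h2 ih => exact hclosed _ _ h2 ih
      exact hgen _ hreach
    calc numComp S = CS.ncard := rfl
      _ ≤ ({C0} : Set G.ConnectedComponent).ncard :=
          Set.ncard_le_ncard hsub (Set.finite_singleton _)
      _ = 1 := Set.ncard_singleton _
      _ ≤ _ := h1

lemma numComp_le_R [Fintype R] [DecidableEq L] [DecidableEq R]
    (B S : Finset (L × R)) (hSB : S ⊆ B) (hst : RecStrong S B)
    (h2 : 1 ≤ Fintype.card R -
      (Finset.univ.filter fun w : R => (B.filter fun e => e.2 = w).card = 1).card) :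
    numComp S ≤ Fintype.card R -
      (Finset.univ.filter fun w : R => (B.filter fun e => e.2 = w).card = 1).card := by
  classical
  have hNR : Nonempty R := Fintype.card_pos_iff.mp (le_trans h2 (Nat.sub_le _ _))
  set G := sgraph S with hG
  set CS : Set G.ConnectedComponent :=
    {C | ∃ e ∈ S, C = G.connectedComponentMk (Sum.inl e.1)} with hCS
  by_cases hA : ∀ C ∈ CS, ∃ w : R,
      G.connectedComponentMk (Sum.inr w) = C ∧ (B.filter fun e => e.2 = w).card ≠ 1
  · set T : Finset R :=
      Finset.univ.filter (fun w : R => ¬ (B.filter fun e => e.2 = w).card = 1) with hT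
    have hTcard : T.card = Fintype.card R -
        (Finset.univ.filter fun w : R => (B.filter fun e => e.2 = w).card = 1).card := by
      rw [hT, Finset.filter_not, Finset.card_sdiff_of_subset (Finset.filter_subset _ _),
        Finset.card_univ]
    have hle : CS.ncard ≤ (T : Set R).ncard := by
      refine Set.ncard_le_ncard_of_injOn (fun C =>
        if h : ∃ w : R, G.connectedComponentMk (Sum.inr w) = C ∧
            (B.filter fun e => e.2 = w).card ≠ 1 then h.choose else Classical.arbitrary R)
        ?_ ?_ T.finite_toSet
      · intro C hC
        have hP := hA C hC
        simp only [dif_pos hP]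
        obtain ⟨-, h2'⟩ := hP.choose_spec
        simp only [hT, Finset.coe_filter, Finset.mem_univ, true_and, Set.mem_setOf_eq]
        exact h2'
      · intro C hC C' hC' heq
        have hP := hA C hC; have hP' := hA C' hC'
        simp only [dif_pos hP, dif_pos hP'] at heq
        rw [← hP.choose_spec.1, ← hP'.choose_spec.1, heq]
    calc numComp S = CS.ncard := rfl
      _ ≤ (T : Set R).ncard := hle
      _ = T.card := Set.ncard_coe_finset T
      _ = _ := hTcard
  · push_neg at hA
    obtain ⟨C0, hC0mem, hbad⟩ := hA
    obtain ⟨e0, he0, hC0⟩ := hC0mem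
    have hclosed : ∀ x y, recArc S B x y →
        G.connectedComponentMk y = C0 → G.connectedComponentMk x = C0 := by
      rintro x y (⟨e', he'B, hx1, hy1⟩ | ⟨e', he'S, hy1, hx1⟩) hy
      · subst hx1; subst hy1
        have hdeg : (B.filter fun e => e.2 = e'.2).card = 1 := hbad _ hy
        have he'S : e' ∈ S := by
          have hreach : G.Reachable (Sum.inr e'.2) (Sum.inl e0.1) := by
            rw [hC0] at hy
            exact SimpleGraph.ConnectedComponent.eq.mp hy
          obtain ⟨eS, heS, heS2⟩ : ∃ eS ∈ S, eS.2 = e'.2 := by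
            rcases edge_at_of_reachable S hreach (by simp) with ⟨e1, he1, hh⟩ | ⟨e1, he1, hh⟩
            · simp at hh
            · exact ⟨e1, he1, (Sum.inr.inj hh).symm⟩
          have huniq := Finset.card_le_one.mp (le_of_eq hdeg)
          have h1m : e' ∈ B.filter (fun e => e.2 = e'.2) := Finset.mem_filter.mpr ⟨he'B, rfl⟩
          have h2m : eS ∈ B.filter (fun e => e.2 = e'.2) := Finset.mem_filter.mpr ⟨hSB heS, heS2⟩
          rw [huniq _ h1m _ h2m]; exact heS
        have hadj : G.Adj (Sum.inl e'.1) (Sum.inr e'.2) := Or.inl ⟨e', he'S, rfl, rfl⟩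
        rw [← hy]
        exact SimpleGraph.ConnectedComponent.eq.mpr hadj.reachable
      · subst hx1; subst hy1
        have hadj : G.Adj (Sum.inl e'.1) (Sum.inr e'.2) := Or.inl ⟨e', he'S, rfl, rfl⟩
        rw [← hy]
        exact (SimpleGraph.ConnectedComponent.eq.mpr hadj.reachable).symm
    have hsub : CS ⊆ {C0} := by
      rintro C ⟨e, he, rfl⟩
      have hreach := hst (Sum.inl e.1) (Sum.inl e0.1)
        ⟨e, hSB he, Or.inl rfl⟩ ⟨e0, hSB he0, Or.inl rfl⟩
      have hmem : G.connectedComponentMk (Sum.inl e.1) = C0 :=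
        Relation.ReflTransGen.head_induction_on
          (motive := fun x (_ : Relation.ReflTransGen (recArc S B) x (Sum.inl e0.1)) =>
            G.connectedComponentMk x = C0)
          hreach hC0.symm (fun h' _ ih => hclosed _ _ h' ih)
      exact hmem
    calc numComp S = CS.ncard := rfl
      _ ≤ ({C0} : Set G.ConnectedComponent).ncard :=
          Set.ncard_le_ncard hsub (Set.finite_singleton _)
      _ = 1 := Set.ncard_singleton _
      _ ≤ _ := h2

end Aux

/-- Let `B` be a bipartite graph with parts `L` (of size `n`) and `R`
(of size `d`), let `r` be the number of degree-1 vertices of `L` and `s` the number of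
degree-1 vertices of `R`.  If `n − r ≥ 1` and `d − s ≥ 1`, then
`λ(B) ≤ min (n − r) (d − s)`. -/
theorem recConn_le_min_of_leaves {L R : Type*} [Fintype L] [Fintype R]
    [DecidableEq L] [DecidableEq R] (B : Finset (L × R))
    (r s : ℕ)
    (hr : r = (Finset.univ.filter fun v : L =>
      (B.filter fun e => e.1 = v).card = 1).card)
    (hs : s = (Finset.univ.filter fun w : R =>
      (B.filter fun e => e.2 = w).card = 1).card)
    (h1 : 1 ≤ Fintype.card L - r) (h2 : 1 ≤ Fintype.card R - s) :
    recConn B ≤ min (Fintype.card L - r) (Fintype.card R - s) := by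
  apply csSup_le'
  rintro m ⟨S, hSB, hst, rfl⟩
  subst hr; subst hs
  exact le_min (numComp_le_L B S hSB hst h1) (numComp_le_R B S hSB hst h2)
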